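/- There is a bijection from {σ ∈ F_g : σ⁻¹(k) ≤ k} to F_{g-1} given by deleting the entry equal to k from the increasing list [σ(1),...,σ(g)] and relabeling each remaining entry m by m-1 if k < m < 2g+1-k and by m-2 if m > 2g+1-k. -/

import Mathlib

/-- The condition defining `W_g` inside `S_{2g}` (0-indexed). -/
def Wcond (g : ℕ) (σ : Equiv.Perm (Fin (2 * g))) : Prop :=
  ∀ i : Fin (2 * g), i.val < g → (σ i).val + (σ i.rev).val = 2 * g - 1

/-- Final (Kostant) elements of `W_g`. -/
def IsFinal (g : ℕ) (σ : Equiv.Perm (Fin (2 * g))) : Prop :=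
  Wcond g σ ∧ ∀ i j : Fin (2 * g), i < j → j.val < g → σ i < σ j

/-- The image set `{σ(1),…,σ(g)}` as a set of 1-indexed natural values. -/
def imgNat (g : ℕ) (σ : Equiv.Perm (Fin (2 * g))) : Finset ℕ :=
  (Finset.univ.filter (fun v : Fin (2 * g) => (σ.symm v).val < g)).image (fun v => v.val + 1)

/-- The relabelling: `m ↦ m` if `m < k`, `m ↦ m-1` if `k < m < 2g+1-k`,
`m ↦ m-2` if `m > 2g+1-k` (1-indexed values). -/
def relabel (g k : ℕ) : ℕ → ℕ := fun m =>
  if m < k then m else if m < 2 * g + 1 - k then m - 1 else m - 2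


/-- Pick predicate: S contains exactly one of each pair {v, rev v}. -/
def PickF (g : ℕ) (S : Finset (Fin (2 * g))) : Prop :=
  ∀ v : Fin (2 * g), v ∈ S ↔ v.rev ∉ S

lemma pick_card {g : ℕ} {S : Finset (Fin (2 * g))} (hS : PickF g S) : S.card = g := by
  have himg : S.image Fin.rev = Sᶜ := by
    ext w
    simp only [Finset.mem_image, Finset.mem_compl]
    constructor
    · rintro ⟨v, hv, rfl⟩
      exact (hS v).mp hv
    · intro hw
      exact ⟨w.rev, by simpa [Fin.rev_rev] using (hS w.rev).mpr (by simpa [Fin.rev_rev] using hw), Fin.rev_rev w⟩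
  have h1 : (S.image Fin.rev).card = S.card :=
    Finset.card_image_of_injective _ Fin.rev_injective
  have h2 : Sᶜ.card = Fintype.card (Fin (2 * g)) - S.card := Finset.card_compl S
  have h3 : S.card ≤ Fintype.card (Fin (2 * g)) := by
    simpa using Finset.card_le_univ S
  rw [himg] at h1
  simp only [Fintype.card_fin] at h2 h3
  omega

section PickPerm
variable {g : ℕ} {S : Finset (Fin (2 * g))}

lemma rev_lt {i : Fin (2 * g)} (h : ¬ i.val < g) : i.rev.val < g := by
  have := i.isLt
  simp only [Fin.val_rev]
  omega

lemma rev_val (i : Fin (2 * g)) : i.rev.val = 2 * g - 1 - i.val := by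
  have := i.isLt
  simp only [Fin.val_rev]
  omega

def pickFun (hc : S.card = g) : Fin (2 * g) → Fin (2 * g) :=
  fun i => if h : i.val < g then S.orderEmbOfFin hc ⟨i.val, h⟩
           else (S.orderEmbOfFin hc ⟨i.rev.val, rev_lt h⟩).rev

lemma pickFun_mem (hc : S.card = g) {i : Fin (2 * g)} (h : i.val < g) :
    pickFun hc i ∈ S := by
  simp only [pickFun, dif_pos h]
  exact Finset.orderEmbOfFin_mem S hc _

lemma pickFun_not_mem (hS : PickF g S) (hc : S.card = g) {i : Fin (2 * g)} (h : ¬ i.val < g) :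
    pickFun hc i ∉ S := by
  simp only [pickFun, dif_neg h]
  have hm : S.orderEmbOfFin hc ⟨i.rev.val, rev_lt h⟩ ∈ S := Finset.orderEmbOfFin_mem S hc _
  exact (hS _).mp hm

lemma pickFun_injective (hS : PickF g S) (hc : S.card = g) :
    Function.Injective (pickFun hc) := by
  intro i j hij
  by_cases hi : i.val < g <;> by_cases hj : j.val < g
  · simp only [pickFun, dif_pos hi, dif_pos hj] at hij
    have := (S.orderEmbOfFin hc).injective hij
    exact Fin.ext (by simpa [Fin.ext_iff] using this)
  · exact absurd hij (by
      intro h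
      exact pickFun_not_mem hS hc hj (h ▸ pickFun_mem hc hi))
  · exact absurd hij.symm (by
      intro h
      exact pickFun_not_mem hS hc hi (h ▸ pickFun_mem hc hj))
  · simp only [pickFun, dif_neg hi, dif_neg hj] at hij
    have h1 := Fin.rev_injective hij
    have h2 := (S.orderEmbOfFin hc).injective h1
    have : i.rev = j.rev := Fin.ext (by simpa [Fin.ext_iff] using h2)
    exact Fin.rev_injective this

noncomputable def pickPerm (hS : PickF g S) (hc : S.card = g) : Equiv.Perm (Fin (2 * g)) :=
  Equiv.ofBijective _ (Finite.injective_iff_bijective.mp (pickFun_injective hS hc))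

lemma pickPerm_apply (hS : PickF g S) (hc : S.card = g) (i : Fin (2 * g)) :
    pickPerm hS hc i = pickFun hc i := rfl

lemma pickPerm_final (hS : PickF g S) (hc : S.card = g) : IsFinal g (pickPerm hS hc) := by
  constructor
  · intro i hi
    have hrev : ¬ i.rev.val < g := by
      have := i.isLt
      simp only [Fin.val_rev]
      omega
    simp only [pickPerm_apply, pickFun, dif_pos hi, dif_neg hrev]
    have : (⟨i.rev.rev.val, rev_lt hrev⟩ : Fin g) = ⟨i.val, hi⟩ := by
      apply Fin.ext
      simp only [Fin.rev_rev]
    rw [this, rev_val]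
    have hlt := (S.orderEmbOfFin hc ⟨i.val, hi⟩).isLt
    omega
  · intro i j hij hj
    have hi : i.val < g := lt_of_le_of_lt (le_of_lt hij) hj
    simp only [pickPerm_apply, pickFun, dif_pos hi, dif_pos hj]
    exact (S.orderEmbOfFin hc).strictMono (by exact Fin.mk_lt_mk.mpr hij)

lemma pickPerm_set (hS : PickF g S) (hc : S.card = g) :
    Finset.univ.filter (fun v : Fin (2 * g) => ((pickPerm hS hc).symm v).val < g) = S := by
  ext v
  simp only [Finset.mem_filter, Finset.mem_univ, true_and]
  set σ := pickPerm hS hc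
  constructor
  · intro h
    have : σ (σ.symm v) ∈ S := pickFun_mem hc h
    simpa using this
  · intro hv
    by_contra h
    have : σ (σ.symm v) ∉ S := pickFun_not_mem hS hc h
    simp at this
    exact this hv
end PickPerm

section Final
variable {g : ℕ} {σ : Equiv.Perm (Fin (2 * g))}

def permSet (g : ℕ) (σ : Equiv.Perm (Fin (2 * g))) : Finset (Fin (2 * g)) :=
  Finset.univ.filter (fun v : Fin (2 * g) => (σ.symm v).val < g)

lemma imgNat_eq (g : ℕ) (σ : Equiv.Perm (Fin (2 * g))) :
    imgNat g σ = (permSet g σ).image (fun v => v.val + 1) := rfl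

lemma wcond_rev (hw : Wcond g σ) (j : Fin (2 * g)) : σ j.rev = (σ j).rev := by
  by_cases hj : j.val < g
  · have h1 := hw j hj
    have h2 := (σ j).isLt
    have h3 := (σ j.rev).isLt
    apply Fin.ext
    rw [rev_val]
    omega
  · have hr : j.rev.val < g := rev_lt hj
    have h1 := hw j.rev hr
    rw [Fin.rev_rev] at h1
    have h2 := (σ j).isLt
    have h3 := (σ j.rev).isLt
    apply Fin.ext
    rw [rev_val]
    omega

lemma wcond_symm_rev (hw : Wcond g σ) (w : Fin (2 * g)) :
    σ.symm w.rev = (σ.symm w).rev := by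
  have := wcond_rev hw (σ.symm w)
  rw [Equiv.apply_symm_apply] at this
  rw [← this, Equiv.symm_apply_apply]

lemma final_pick (hf : IsFinal g σ) : PickF g (permSet g σ) := by
  intro v
  simp only [permSet, Finset.mem_filter, Finset.mem_univ, true_and]
  rw [wcond_symm_rev hf.1, rev_val]
  have := (σ.symm v).isLt
  constructor
  · intro h h'
    omega
  · intro h
    omega

lemma final_card (hf : IsFinal g σ) : (permSet g σ).card = g :=
  pick_card (final_pick hf)

lemma final_eq_pickPerm {S : Finset (Fin (2 * g))} (hS : PickF g S) (hc : S.card = g)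
    (hf : IsFinal g σ) (hset : permSet g σ = S) : σ = pickPerm hS hc := by
  have hfirst : ∀ i : Fin (2 * g), i.val < g → σ i = pickPerm hS hc i := by
    intro i hi
    have hg2 : ∀ n, n < g → n < 2 * g := by intro n h; omega
    set f : Fin g → Fin (2 * g) := fun x => σ ⟨x.val, hg2 x.val x.isLt⟩ with hfdef
    have hmem : ∀ x, f x ∈ S := by
      intro x
      rw [← hset]
      simp only [permSet, Finset.mem_filter, Finset.mem_univ, true_and, hfdef,
        Equiv.symm_apply_apply]
      exact x.isLt
    have hmono : StrictMono f := by
      intro a b hab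
      exact hf.2 _ _ (Fin.mk_lt_mk.mpr hab) b.isLt
    have := congrFun (Finset.orderEmbOfFin_unique hc hmem hmono) ⟨i.val, hi⟩
    simp only [pickPerm_apply, pickFun, dif_pos hi]
    rw [← this]
  apply Equiv.ext
  intro i
  by_cases hi : i.val < g
  · exact hfirst i hi
  · have hr : i.rev.val < g := rev_lt hi
    have h1 : σ i.rev = pickPerm hS hc i.rev := hfirst i.rev hr
    have h2 := wcond_rev hf.1 i.rev
    have h3 := wcond_rev (pickPerm_final hS hc).1 i.rev
    rw [Fin.rev_rev] at h2 h3
    rw [h2, h3, h1]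

lemma final_le (hf : IsFinal g σ) : ∀ n, (h : n < g) → n ≤ (σ ⟨n, by omega⟩).val := by
  intro n
  induction n with
  | zero => intro h; omega
  | succ m ih =>
    intro h
    have hm : m < g := by omega
    have hlt := hf.2 ⟨m, by omega⟩ ⟨m + 1, by omega⟩ (Fin.mk_lt_mk.mpr (by omega)) h
    have := ih hm
    rw [Fin.lt_def] at hlt
    omega

lemma final_pos_le (hf : IsFinal g σ) {j : Fin (2 * g)} (h : j.val < g) :
    j.val ≤ (σ j).val := by
  have := final_le hf j.val h
  have hj : (⟨j.val, by omega⟩ : Fin (2 * g)) = j := Fin.ext rfl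
  rwa [hj] at this

lemma final_kcond {k : ℕ} (hk1 : 1 ≤ k) (hkg : k ≤ g) (hf : IsFinal g σ) :
    (σ.symm ⟨k - 1, by omega⟩).val < k ↔ (⟨k - 1, by omega⟩ : Fin (2 * g)) ∈ permSet g σ := by
  have key : ∀ v : Fin (2 * g), v.val = k - 1 →
      ((σ.symm v).val < k ↔ v ∈ permSet g σ) := by
    intro v hv
    simp only [permSet, Finset.mem_filter, Finset.mem_univ, true_and]
    constructor
    · intro h; omega
    · intro h
      have h2 := final_pos_le hf (j := σ.symm v) h
      have h1 : (σ (σ.symm v)).val = k - 1 := by rw [Equiv.apply_symm_apply, hv]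
      omega
  exact key _ rfl
end Final

section Relabel
variable {g k : ℕ}

def relF (hg : 2 ≤ g) (hk1 : 1 ≤ k) (hkg : k ≤ g) (v : Fin (2 * g)) : Fin (2 * (g - 1)) :=
  ⟨relabel g k (v.val + 1) - 1, by
    have := v.isLt
    simp only [relabel]
    split_ifs <;> omega⟩

def unrelF (hg : 2 ≤ g) (hk1 : 1 ≤ k) (hkg : k ≤ g) (w : Fin (2 * (g - 1))) : Fin (2 * g) :=
  ⟨if w.val < k - 1 then w.val else if w.val < 2 * g - k - 1 then w.val + 1 else w.val + 2, by
    have := w.isLt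
    split_ifs <;> omega⟩

variable (hg : 2 ≤ g) (hk1 : 1 ≤ k) (hkg : k ≤ g)

lemma relF_val (v : Fin (2 * g)) :
    (relF hg hk1 hkg v).val =
      if v.val + 1 < k then v.val else if v.val + 1 < 2 * g + 1 - k then v.val - 1 else v.val - 1 - 1 := by
  simp only [relF, relabel]
  split_ifs <;> omega

lemma unrelF_relF {v : Fin (2 * g)} (h1 : v.val ≠ k - 1) (h2 : v.val ≠ 2 * g - k) :
    unrelF hg hk1 hkg (relF hg hk1 hkg v) = v := by
  have hv := v.isLt
  have := relF_val hg hk1 hkg v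
  apply Fin.ext
  simp only [unrelF, this]
  split_ifs <;> omega

lemma relF_unrelF (w : Fin (2 * (g - 1))) :
    relF hg hk1 hkg (unrelF hg hk1 hkg w) = w := by
  have hw := w.isLt
  apply Fin.ext
  rw [relF_val]
  simp only [unrelF]
  split_ifs <;> omega

lemma unrelF_ne (w : Fin (2 * (g - 1))) :
    (unrelF hg hk1 hkg w).val ≠ k - 1 ∧ (unrelF hg hk1 hkg w).val ≠ 2 * g - k := by
  have hw := w.isLt
  simp only [unrelF]
  split_ifs <;> omega

lemma unrelF_rev (w : Fin (2 * (g - 1))) :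
    unrelF hg hk1 hkg w.rev = (unrelF hg hk1 hkg w).rev := by
  have hw := w.isLt
  apply Fin.ext
  rw [rev_val]
  simp only [unrelF, rev_val]
  split_ifs <;> omega
end Relabel

section SetLevel
variable {g k : ℕ}

def kmF (hg : 2 ≤ g) (hk1 : 1 ≤ k) (hkg : k ≤ g) : Fin (2 * g) :=
  ⟨k - 1, Nat.lt_of_lt_of_le (Nat.sub_lt hk1 Nat.one_pos) (by omega)⟩

variable (hg : 2 ≤ g) (hk1 : 1 ≤ k) (hkg : k ≤ g)

lemma kmF_val : (kmF hg hk1 hkg).val = k - 1 := rfl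

lemma kmF_rev_val : (kmF hg hk1 hkg).rev.val = 2 * g - k := by
  rw [rev_val, kmF_val]
  omega

lemma relF_rev {v : Fin (2 * g)} (h1 : v.val ≠ k - 1) (h2 : v.val ≠ 2 * g - k) :
    relF hg hk1 hkg v.rev = (relF hg hk1 hkg v).rev := by
  conv_lhs => rw [← unrelF_relF hg hk1 hkg h1 h2, ← unrelF_rev, relF_unrelF]

variable {S : Finset (Fin (2 * g))} {T : Finset (Fin (2 * (g - 1)))}

lemma mem_TS (hS : PickF g S) (hmem : kmF hg hk1 hkg ∈ S) (w : Fin (2 * (g - 1))) :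
    w ∈ (S.erase (kmF hg hk1 hkg)).image (relF hg hk1 hkg) ↔ unrelF hg hk1 hkg w ∈ S := by
  constructor
  · intro hw
    obtain ⟨v, hv, rfl⟩ := Finset.mem_image.mp hw
    obtain ⟨hvne, hvS⟩ := Finset.mem_erase.mp hv
    have h1 : v.val ≠ k - 1 := fun h => hvne (Fin.ext h)
    have h2 : v.val ≠ 2 * g - k := by
      intro h
      have : v = (kmF hg hk1 hkg).rev := Fin.ext (by rw [kmF_rev_val, h])
      exact (hS _).mp hmem (this ▸ hvS)
    rw [unrelF_relF hg hk1 hkg h1 h2]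
    exact hvS
  · intro h
    refine Finset.mem_image.mpr ⟨unrelF hg hk1 hkg w, Finset.mem_erase.mpr ⟨?_, h⟩,
      relF_unrelF hg hk1 hkg w⟩
    intro hcontra
    exact (unrelF_ne hg hk1 hkg w).1 (by rw [hcontra, kmF_val])

lemma pick_TS (hS : PickF g S) (hmem : kmF hg hk1 hkg ∈ S) :
    PickF (g - 1) ((S.erase (kmF hg hk1 hkg)).image (relF hg hk1 hkg)) := by
  intro w
  rw [mem_TS hg hk1 hkg hS hmem, mem_TS hg hk1 hkg hS hmem, unrelF_rev]
  exact hS _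

lemma mem_ST (v : Fin (2 * g)) :
    v ∈ insert (kmF hg hk1 hkg) (T.image (unrelF hg hk1 hkg)) ↔
      v = kmF hg hk1 hkg ∨ (v.val ≠ k - 1 ∧ v.val ≠ 2 * g - k ∧ relF hg hk1 hkg v ∈ T) := by
  rw [Finset.mem_insert]
  apply or_congr_right
  rw [Finset.mem_image]
  constructor
  · rintro ⟨w, hw, rfl⟩
    have hne := unrelF_ne hg hk1 hkg w
    exact ⟨hne.1, hne.2, by rwa [relF_unrelF]⟩
  · rintro ⟨h1, h2, hm⟩
    exact ⟨relF hg hk1 hkg v, hm, unrelF_relF hg hk1 hkg h1 h2⟩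

lemma pick_ST (hT : PickF (g - 1) T) :
    PickF g (insert (kmF hg hk1 hkg) (T.image (unrelF hg hk1 hkg))) := by
  intro v
  rw [mem_ST, mem_ST]
  have hv := v.isLt
  have hrv : v.rev.val = 2 * g - 1 - v.val := rev_val v
  by_cases h1 : v.val = k - 1
  · have hvkm : v = kmF hg hk1 hkg := Fin.ext h1
    have hrne : v.rev ≠ kmF hg hk1 hkg := by
      intro h
      have := congrArg Fin.val h
      rw [hrv, kmF_val] at this
      omega
    constructor
    · intro _
      rintro (h | ⟨_, hne2, _⟩)
      · exact hrne h
      · exact hne2 (by rw [hrv, h1]; omega)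
    · intro _
      exact Or.inl hvkm
  · by_cases h2 : v.val = 2 * g - k
    · have hrkm : v.rev = kmF hg hk1 hkg := Fin.ext (by rw [hrv, kmF_val]; omega)
      constructor
      · rintro (h | ⟨hne1, hne2, _⟩)
        · exact absurd (congrArg Fin.val h) (by rw [kmF_val]; exact h1)
        · exact absurd h2 hne2
      · intro h
        exact absurd (Or.inl hrkm) h
    · have hr1 : v.rev.val ≠ k - 1 := by rw [hrv]; omega
      have hr2 : v.rev.val ≠ 2 * g - k := by rw [hrv]; omega
      have hrne : v.rev ≠ kmF hg hk1 hkg := fun h => hr1 (by rw [h, kmF_val])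
      have hvne : v ≠ kmF hg hk1 hkg := fun h => h1 (by rw [h, kmF_val])
      rw [relF_rev hg hk1 hkg h1 h2]
      constructor
      · rintro (h | ⟨_, _, hm⟩) hcon
        · exact hvne h
        · rcases hcon with h | ⟨_, _, hm'⟩
          · exact hrne h
          · exact (hT _).mp hm hm'
      · intro h
        right
        refine ⟨h1, h2, (hT _).mpr ?_⟩
        intro hmm
        exact h (Or.inr ⟨hr1, hr2, hmm⟩)

lemma ST_TS (hS : PickF g S) (hmem : kmF hg hk1 hkg ∈ S) :
    insert (kmF hg hk1 hkg)
      (((S.erase (kmF hg hk1 hkg)).image (relF hg hk1 hkg)).image (unrelF hg hk1 hkg)) = S := by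
  ext v
  rw [mem_ST]
  constructor
  · rintro (rfl | ⟨h1, h2, hm⟩)
    · exact hmem
    · rwa [mem_TS hg hk1 hkg hS hmem, unrelF_relF hg hk1 hkg h1 h2] at hm
  · intro hv
    by_cases h1 : v.val = k - 1
    · exact Or.inl (Fin.ext h1)
    · have h2 : v.val ≠ 2 * g - k := by
        intro h
        have : v = (kmF hg hk1 hkg).rev := Fin.ext (by rw [kmF_rev_val, h])
        exact (hS _).mp hmem (this ▸ hv)
      exact Or.inr ⟨h1, h2, by rw [mem_TS hg hk1 hkg hS hmem, unrelF_relF hg hk1 hkg h1 h2]; exact hv⟩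

lemma TS_ST (hT : PickF (g - 1) T) :
    ((insert (kmF hg hk1 hkg) (T.image (unrelF hg hk1 hkg))).erase (kmF hg hk1 hkg)).image
      (relF hg hk1 hkg) = T := by
  ext w
  rw [mem_TS hg hk1 hkg (pick_ST hg hk1 hkg hT) (Finset.mem_insert_self _ _), mem_ST]
  have hne := unrelF_ne hg hk1 hkg w
  constructor
  · rintro (h | ⟨_, _, hm⟩)
    · exact absurd (by rw [h, kmF_val] : (unrelF hg hk1 hkg w).val = k - 1) hne.1
    · rwa [relF_unrelF] at hm
  · intro h
    exact Or.inr ⟨hne.1, hne.2, by rwa [relF_unrelF]⟩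
end SetLevel

section Assemble
variable {g : ℕ}

lemma pickPerm_permSet {S : Finset (Fin (2 * g))} (hS : PickF g S) (hc : S.card = g) :
    permSet g (pickPerm hS hc) = S := pickPerm_set hS hc

lemma final_ext {σ τ : Equiv.Perm (Fin (2 * g))} (hσ : IsFinal g σ) (hτ : IsFinal g τ)
    (h : permSet g σ = permSet g τ) : σ = τ := by
  rw [final_eq_pickPerm (final_pick hτ) (final_card hτ) hσ h,
    ← final_eq_pickPerm (final_pick hτ) (final_card hτ) hτ rfl]

variable {k : ℕ}

lemma relF_relabel (hg : 2 ≤ g) (hk1 : 1 ≤ k) (hkg : k ≤ g) {v : Fin (2 * g)}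
    (h1 : v.val ≠ k - 1) : (relF hg hk1 hkg v).val + 1 = relabel g k (v.val + 1) := by
  have := v.isLt
  simp only [relF, relabel]
  split_ifs <;> omega

noncomputable def theF (g k : ℕ) (hg : 2 ≤ g) (hk1 : 1 ≤ k) (hkg : k ≤ g)
    (σp : {σ : Equiv.Perm (Fin (2 * g)) //
            IsFinal g σ ∧ (σ.symm ⟨k - 1, Nat.lt_of_lt_of_le (Nat.sub_lt hk1 Nat.one_pos) (by omega)⟩).val < k}) :
    {τ : Equiv.Perm (Fin (2 * (g - 1))) // IsFinal (g - 1) τ} :=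
  ⟨pickPerm
    (pick_TS hg hk1 hkg (final_pick σp.2.1) ((final_kcond hk1 hkg σp.2.1).mp σp.2.2))
    (pick_card (pick_TS hg hk1 hkg (final_pick σp.2.1) ((final_kcond hk1 hkg σp.2.1).mp σp.2.2))),
   pickPerm_final _ _⟩

noncomputable def theG (g k : ℕ) (hg : 2 ≤ g) (hk1 : 1 ≤ k) (hkg : k ≤ g)
    (τp : {τ : Equiv.Perm (Fin (2 * (g - 1))) // IsFinal (g - 1) τ}) :
    {σ : Equiv.Perm (Fin (2 * g)) //
      IsFinal g σ ∧ (σ.symm ⟨k - 1, Nat.lt_of_lt_of_le (Nat.sub_lt hk1 Nat.one_pos) (by omega)⟩).val < k} :=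
  ⟨pickPerm (pick_ST hg hk1 hkg (final_pick τp.2))
      (pick_card (pick_ST hg hk1 hkg (final_pick τp.2))),
   pickPerm_final _ _, by
    rw [final_kcond hk1 hkg (pickPerm_final _ _)]
    rw [show permSet g _ = _ from pickPerm_permSet (pick_ST hg hk1 hkg (final_pick τp.2)) _]
    exact Finset.mem_insert_self _ _⟩

lemma theF_permSet (hg : 2 ≤ g) (hk1 : 1 ≤ k) (hkg : k ≤ g) (σp) :
    permSet (g - 1) (theF g k hg hk1 hkg σp).1 =
      ((permSet g σp.1).erase (kmF hg hk1 hkg)).image (relF hg hk1 hkg) :=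
  pickPerm_permSet
    (pick_TS hg hk1 hkg (final_pick σp.2.1) ((final_kcond hk1 hkg σp.2.1).mp σp.2.2)) _

lemma theG_permSet (hg : 2 ≤ g) (hk1 : 1 ≤ k) (hkg : k ≤ g) (τp) :
    permSet g (theG g k hg hk1 hkg τp).1 =
      insert (kmF hg hk1 hkg) ((permSet (g - 1) τp.1).image (unrelF hg hk1 hkg)) :=
  pickPerm_permSet (pick_ST hg hk1 hkg (final_pick τp.2)) _

end Assemble

/-- deleting the entry `k` from the increasing list
`[σ(1),…,σ(g)]` and relabelling gives a bijection
`{σ ∈ F_g : σ⁻¹(k) ≤ k} → F_{g-1}`. -/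
theorem final_delete_relabel_bijection (g k : ℕ) (hg : 2 ≤ g) (hk1 : 1 ≤ k) (hkg : k ≤ g) :
    ∃ f : {σ : Equiv.Perm (Fin (2 * g)) //
            IsFinal g σ ∧ (σ.symm ⟨k - 1, by omega⟩).val < k} →
          {τ : Equiv.Perm (Fin (2 * (g - 1))) // IsFinal (g - 1) τ},
      Function.Bijective f ∧
      ∀ σ, imgNat (g - 1) (f σ).1 = ((imgNat g σ.1).erase k).image (relabel g k) := by
  have hGF : ∀ σp, theG g k hg hk1 hkg (theF g k hg hk1 hkg σp) = σp := by
    intro σp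
    apply Subtype.ext
    apply final_ext (theG g k hg hk1 hkg _).2.1 σp.2.1
    rw [theG_permSet, theF_permSet]
    exact ST_TS hg hk1 hkg (final_pick σp.2.1) ((final_kcond hk1 hkg σp.2.1).mp σp.2.2)
  have hFG : ∀ τp, theF g k hg hk1 hkg (theG g k hg hk1 hkg τp) = τp := by
    intro τp
    apply Subtype.ext
    apply final_ext (theF g k hg hk1 hkg _).2 τp.2
    rw [theF_permSet, theG_permSet]
    have hmem : kmF hg hk1 hkg ∈ permSet g (theG g k hg hk1 hkg τp).1 := by
      rw [theG_permSet]
      exact Finset.mem_insert_self _ _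
    exact TS_ST hg hk1 hkg (final_pick τp.2)
  refine ⟨theF g k hg hk1 hkg, ⟨?_, ?_⟩, ?_⟩
  · intro a b hab
    have := congrArg (theG g k hg hk1 hkg) hab
    rwa [hGF, hGF] at this
  · intro τp
    exact ⟨theG g k hg hk1 hkg τp, hFG τp⟩
  · intro σp
    rw [imgNat_eq, theF_permSet, imgNat_eq]
    have hinj : Function.Injective (fun v : Fin (2 * g) => v.val + 1) := by
      intro a b h
      simp only at h
      exact Fin.ext (by omega)
    have hbk : ((permSet g σp.1).image (fun v : Fin (2 * g) => v.val + 1)).erase k =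
        ((permSet g σp.1).erase (kmF hg hk1 hkg)).image (fun v : Fin (2 * g) => v.val + 1) := by
      rw [Finset.image_erase hinj]
      congr 1
      show k = (kmF hg hk1 hkg).val + 1
      rw [kmF_val]
      omega
    rw [hbk, Finset.image_image, Finset.image_image]
    apply Finset.image_congr
    intro v hv
    have h1 : v.val ≠ k - 1 := by
      intro h
      exact (Finset.mem_erase.mp hv).1 (Fin.ext h)
    simp only [Function.comp_apply]
    exact relF_relabel hg hk1 hkg h1
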